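/- A monic, involutively autoreduced, minimal involutive basis of a nonzero left ideal I in a polynomial algebra of solvable type over a field, with respect to a fixed involutive division L and term order ≺, is unique if it exists: if ℋ₁ and ℋ₂ are two such bases of I then ℋ₁ = ℋ₂. -/

import Mathlib

/-- Polynomials in `n` variables over `R`, represented by their coefficient families
indexed by multi indices. -/
abbrev SPoly (R : Type) [CommRing R] (n : ℕ) := (Fin n → ℕ) →₀ R

/-- The leading exponent of a polynomial with respect to a term order (the maximal
element of its support; `0` for the zero polynomial). -/
noncomputable def lexp {R : Type} [CommRing R] {n : ℕ} (ord : LinearOrder (Fin n → ℕ))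
    (f : SPoly R n) : Fin n → ℕ :=
  WithBot.unbotD 0 (@Finset.max _ ord f.support)

/-- A polynomial algebra of solvable type `(P, ⋆, ≺)`: the `R`-module `R[x₁,…,xₙ]`
equipped with an associative unital multiplication `⋆` such that `r ⋆ f = r • f` for
scalars, and with respect to a term order `≺` (a monoid order) the leading exponent of
`x^μ ⋆ x^ν` is `μ + ν` and of `x^μ ⋆ r` (for `r ≠ 0`) is `μ`. -/
structure SolvMul (R : Type) [CommRing R] (n : ℕ) (ord : LinearOrder (Fin n → ℕ)) where
  star : SPoly R n → SPoly R n → SPoly R n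
  zero_min : ∀ μ : Fin n → ℕ, ord.le 0 μ
  add_compat : ∀ μ ν σ : Fin n → ℕ, ord.lt μ ν → ord.lt (μ + σ) (ν + σ)
  star_assoc : ∀ f g h : SPoly R n, star (star f g) h = star f (star g h)
  star_add : ∀ f g h : SPoly R n, star f (g + h) = star f g + star f h
  add_star : ∀ f g h : SPoly R n, star (f + g) h = star f h + star g h
  one_star : ∀ f : SPoly R n, star (Finsupp.single 0 1) f = f
  star_one : ∀ f : SPoly R n, star f (Finsupp.single 0 1) = f
  scalar_star : ∀ (r : R) (f : SPoly R n), star (Finsupp.single 0 r) f = r • f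
  mono_mono : ∀ μ ν : Fin n → ℕ,
    star (Finsupp.single μ 1) (Finsupp.single ν 1) ≠ 0 ∧
      lexp ord (star (Finsupp.single μ 1) (Finsupp.single ν 1)) = μ + ν
  mono_scalar : ∀ (μ : Fin n → ℕ) (r : R), r ≠ 0 →
    star (Finsupp.single μ 1) (Finsupp.single 0 r) ≠ 0 ∧
      lexp ord (star (Finsupp.single μ 1) (Finsupp.single 0 r)) = μ


/-- The restricted cone of `ν` determined by a set `N` of multiplicative indices. -/
def rcone {n : ℕ} (N : Set (Fin n)) (ν : Fin n → ℕ) : Set (Fin n → ℕ) :=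
  {μ | (∀ i, ν i ≤ μ i) ∧ ∀ i ∉ N, μ i = ν i}

/-- An involutive division on `ℕ^n`. -/
structure InvDiv (n : ℕ) where
  mult : Finset (Fin n → ℕ) → (Fin n → ℕ) → Set (Fin n)
  nested : ∀ (𝒩 : Finset (Fin n → ℕ)), ∀ μ ∈ 𝒩, ∀ ν ∈ 𝒩,
    (rcone (mult 𝒩 μ) μ ∩ rcone (mult 𝒩 ν) ν).Nonempty →
      rcone (mult 𝒩 μ) μ ⊆ rcone (mult 𝒩 ν) ν ∨
        rcone (mult 𝒩 ν) ν ⊆ rcone (mult 𝒩 μ) μ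
  mono : ∀ (𝒩 𝒩' : Finset (Fin n → ℕ)), 𝒩' ⊆ 𝒩 → ∀ ν ∈ 𝒩', mult 𝒩 ν ⊆ mult 𝒩' ν

/-- The set of leading exponents of a finite set of polynomials. -/
noncomputable def leadSet {R : Type} [CommRing R] {n : ℕ} (ord : LinearOrder (Fin n → ℕ))
    (ℋ : Finset (SPoly R n)) : Finset (Fin n → ℕ) :=
  ℋ.image (lexp ord)

/-- The monoid ideal of leading exponents of (the nonzero elements of) a set of
polynomials. -/
def leadExps {R : Type} [CommRing R] {n : ℕ} (ord : LinearOrder (Fin n → ℕ))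
    (I : Set (SPoly R n)) : Set (Fin n → ℕ) :=
  {μ | ∃ f ∈ I, f ≠ 0 ∧ lexp ord f = μ}

/-- `P` gives an involutive standard representation of `f` with respect to `ℋ`:
`f = Σ_{h∈ℋ} P_h ⋆ h`, every `P_h` only involves the multiplicative variables of `h`,
and `le(P_h ⋆ h) ⪯ le(f)`. -/
def IsInvRep {R : Type} [CommRing R] {n : ℕ} (ord : LinearOrder (Fin n → ℕ))
    (A : SolvMul R n ord) (L : InvDiv n) (ℋ : Finset (SPoly R n)) (f : SPoly R n)
    (P : {h // h ∈ ℋ} → SPoly R n) : Prop :=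
  f = ∑ h ∈ ℋ.attach, A.star (P h) h.1 ∧
    ∀ h : {h // h ∈ ℋ},
      (∀ μ ∈ (P h).support, ∀ i ∉ L.mult (leadSet ord ℋ) (lexp ord h.1), μ i = 0) ∧
      ord.le (lexp ord (A.star (P h) h.1)) (lexp ord f)

/-- `ℋ` is a weak involutive basis of the left ideal `I`: `ℋ ⊂ I \ {0}` and the
leading exponents of `ℋ` form a weak involutive basis of the monoid ideal of leading
exponents of `I`. -/
def WeakInvBasis {R : Type} [CommRing R] {n : ℕ} (ord : LinearOrder (Fin n → ℕ))
    (L : InvDiv n) (I : Set (SPoly R n)) (ℋ : Finset (SPoly R n)) : Prop :=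
  (↑ℋ : Set (SPoly R n)) ⊆ I ∧ (0 : SPoly R n) ∉ ℋ ∧
    (⋃ μ ∈ leadSet ord ℋ, rcone (L.mult (leadSet ord ℋ) μ) μ) = leadExps ord I

/-- `ℋ` is a strong involutive basis of `I`: a weak one whose involutive cones are
pairwise disjoint and whose elements have pairwise distinct leading exponents. -/
def StrongInvBasis {R : Type} [CommRing R] {n : ℕ} (ord : LinearOrder (Fin n → ℕ))
    (L : InvDiv n) (I : Set (SPoly R n)) (ℋ : Finset (SPoly R n)) : Prop :=
  WeakInvBasis ord L I ℋ ∧ Set.InjOn (lexp ord) (↑ℋ : Set (SPoly R n)) ∧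
    ∀ μ ∈ leadSet ord ℋ, ∀ ν ∈ leadSet ord ℋ, μ ≠ ν →
      Disjoint (rcone (L.mult (leadSet ord ℋ) μ) μ) (rcone (L.mult (leadSet ord ℋ) ν) ν)

/-- `ℋ` is a minimal involutive basis: its set of leading exponents is contained in
every (strong) involutive basis of the monoid ideal of leading exponents of `I`. -/
def MinimalInvBasis {R : Type} [CommRing R] {n : ℕ} (ord : LinearOrder (Fin n → ℕ))
    (L : InvDiv n) (I : Set (SPoly R n)) (ℋ : Finset (SPoly R n)) : Prop :=
  ∀ 𝒩' : Finset (Fin n → ℕ),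
    ((↑𝒩' : Set (Fin n → ℕ)) ⊆ leadExps ord I ∧
      (⋃ μ ∈ 𝒩', rcone (L.mult 𝒩' μ) μ) = leadExps ord I ∧
      ∀ μ ∈ 𝒩', ∀ ν ∈ 𝒩', μ ≠ ν →
        Disjoint (rcone (L.mult 𝒩' μ) μ) (rcone (L.mult 𝒩' ν) ν)) →
    leadSet ord ℋ ⊆ 𝒩'

private lemma lexp_mem_support {R : Type} [CommRing R] {n : ℕ}
    (ord : LinearOrder (Fin n → ℕ)) {f : SPoly R n} (hf : f ≠ 0) :
    lexp ord f ∈ f.support := by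
  have hne : f.support.Nonempty := Finsupp.support_nonempty_iff.mpr hf
  obtain ⟨a, ha⟩ := @Finset.max_of_nonempty _ ord _ hne
  have hl : lexp ord f = a := by unfold lexp; rw [ha]; rfl
  rw [hl]
  exact @Finset.mem_of_max _ ord _ _ ha

private lemma le_lexp {R : Type} [CommRing R] {n : ℕ}
    (ord : LinearOrder (Fin n → ℕ)) {f : SPoly R n} {μ : Fin n → ℕ}
    (hμ : μ ∈ f.support) : ord.le μ (lexp ord f) := by
  have hf : f ≠ 0 := by
    intro h0
    rw [h0] at hμ
    simp at hμ
  have hne : f.support.Nonempty := Finsupp.support_nonempty_iff.mpr hf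
  obtain ⟨a, ha⟩ := @Finset.max_of_nonempty _ ord _ hne
  have hl : lexp ord f = a := by unfold lexp; rw [ha]; rfl
  have h := @Finset.le_max _ ord _ _ hμ
  rw [ha] at h
  rw [hl]
  exact (@WithBot.coe_le_coe _ μ a ord.toLE).mp h

private lemma rcone_le {R : Type} [CommRing R] {n : ℕ}
    (ord : LinearOrder (Fin n → ℕ)) (A : SolvMul R n ord)
    {N : Set (Fin n)} {ν μ : Fin n → ℕ} (hμ : μ ∈ rcone N ν) : ord.le ν μ := by
  obtain ⟨h1, _⟩ := hμ
  by_cases he : μ = ν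
  · rw [he]; exact ord.le_refl ν
  · set σ : Fin n → ℕ := fun i => μ i - ν i with hσdef
    have hσν : σ + ν = μ := by
      funext i
      have := h1 i
      simp only [hσdef, Pi.add_apply]
      omega
    have hσ0 : σ ≠ 0 := by
      intro h0
      apply he
      funext i
      have : σ i = 0 := by rw [h0]; rfl
      have h1i := h1 i
      simp only [hσdef] at this
      omega
    have hle : ord.le 0 σ := A.zero_min σ
    have hnle : ¬ ord.le σ 0 := fun h => hσ0 (ord.le_antisymm σ 0 h hle)
    have hlt : ord.lt 0 σ := (ord.lt_iff_le_not_ge 0 σ).mpr ⟨hle, hnle⟩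
    have := A.add_compat 0 σ ν hlt
    rw [zero_add, hσν] at this
    exact ((ord.lt_iff_le_not_ge ν μ).mp this).1

/-- Uniqueness of the monic, involutively autoreduced, minimal involutive basis of a
nonzero left ideal `I` of a polynomial algebra of solvable type over a field: two
such bases coincide. -/
theorem stmt18 {K : Type} [Field K] {n : ℕ} (ord : LinearOrder (Fin n → ℕ))
    (A : SolvMul K n ord) (L : InvDiv n) (I : Set (SPoly K n))
    (hI0 : (0 : SPoly K n) ∈ I)
    (hIadd : ∀ f ∈ I, ∀ g ∈ I, f + g ∈ I)
    (hIneg : ∀ f ∈ I, -f ∈ I)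
    (hImul : ∀ f ∈ I, ∀ p : SPoly K n, A.star p f ∈ I)
    (hInz : I ≠ {0})
    (ℋ₁ ℋ₂ : Finset (SPoly K n))
    (hb₁ : StrongInvBasis ord L I ℋ₁) (hb₂ : StrongInvBasis ord L I ℋ₂)
    (hmonic₁ : ∀ h ∈ ℋ₁, h (lexp ord h) = 1)
    (hmonic₂ : ∀ h ∈ ℋ₂, h (lexp ord h) = 1)
    (hauto₁ : ∀ h ∈ ℋ₁, ∀ μ ∈ h.support, ∀ h' ∈ ℋ₁, h' ≠ h →
      μ ∉ rcone (L.mult (leadSet ord ℋ₁) (lexp ord h')) (lexp ord h'))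
    (hauto₂ : ∀ h ∈ ℋ₂, ∀ μ ∈ h.support, ∀ h' ∈ ℋ₂, h' ≠ h →
      μ ∉ rcone (L.mult (leadSet ord ℋ₂) (lexp ord h')) (lexp ord h'))
    (hmin₁ : MinimalInvBasis ord L I ℋ₁) (hmin₂ : MinimalInvBasis ord L I ℋ₂) :
    ℋ₁ = ℋ₂ := by
  have hsub₁ : (↑ℋ₁ : Set (SPoly K n)) ⊆ I := hb₁.1.1
  have hsub₂ : (↑ℋ₂ : Set (SPoly K n)) ⊆ I := hb₂.1.1
  -- Step 1: the minimal bases have equal leading-exponent sets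
  have cond : ∀ ℋ : Finset (SPoly K n), StrongInvBasis ord L I ℋ →
      ((↑(leadSet ord ℋ) : Set (Fin n → ℕ)) ⊆ leadExps ord I ∧
        (⋃ μ ∈ leadSet ord ℋ, rcone (L.mult (leadSet ord ℋ) μ) μ) = leadExps ord I ∧
        ∀ μ ∈ leadSet ord ℋ, ∀ ν ∈ leadSet ord ℋ, μ ≠ ν →
          Disjoint (rcone (L.mult (leadSet ord ℋ) μ) μ)
            (rcone (L.mult (leadSet ord ℋ) ν) ν)) := by
    intro ℋ hb
    refine ⟨?_, hb.1.2.2, hb.2.2⟩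
    intro μ hμ
    obtain ⟨h, hh, rfl⟩ := Finset.mem_image.mp (Finset.mem_coe.mp hμ)
    exact ⟨h, hb.1.1 hh, fun h0 => hb.1.2.1 (h0 ▸ hh), rfl⟩
  have hlead : leadSet ord ℋ₁ = leadSet ord ℋ₂ :=
    Finset.Subset.antisymm (hmin₁ _ (cond ℋ₂ hb₂)) (hmin₂ _ (cond ℋ₁ hb₁))
  -- Step 2: elements with equal leading exponents coincide
  have key : ∀ h₁ ∈ ℋ₁, ∀ h₂ ∈ ℋ₂, lexp ord h₁ = lexp ord h₂ → h₁ = h₂ := by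
    intro h₁ m₁ h₂ m₂ hlx
    by_contra hne
    set g := h₁ - h₂ with hgdef
    have hg0 : g ≠ 0 := sub_ne_zero.mpr hne
    have hgI : g ∈ I := by
      have := hIadd h₁ (hsub₁ m₁) (-h₂) (hIneg h₂ (hsub₂ m₂))
      rwa [← sub_eq_add_neg] at this
    have hgsupp : lexp ord g ∈ g.support := lexp_mem_support ord hg0
    have hgmem : lexp ord g ∈ h₁.support ∪ h₂.support :=
      Finsupp.support_sub hgsupp
    have hgne : lexp ord g ≠ lexp ord h₁ := by
      intro he
      have hne0 : g (lexp ord g) ≠ 0 := Finsupp.mem_support_iff.mp hgsupp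
      apply hne0
      rw [he]
      have e2 : h₂ (lexp ord h₁) = 1 := by rw [hlx]; exact hmonic₂ h₂ m₂
      have : g (lexp ord h₁) = h₁ (lexp ord h₁) - h₂ (lexp ord h₁) :=
        Finsupp.sub_apply h₁ h₂ (lexp ord h₁)
      rw [this, hmonic₁ h₁ m₁, e2, sub_self]
    have hgle : ord.le (lexp ord g) (lexp ord h₁) := by
      rcases Finset.mem_union.mp hgmem with h | h
      · exact le_lexp ord h
      · rw [hlx]; exact le_lexp ord h
    have hmemI : lexp ord g ∈ leadExps ord I := ⟨g, hgI, hg0, rfl⟩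
    rw [← hb₁.1.2.2] at hmemI
    obtain ⟨ν, hν, hmem⟩ : ∃ ν ∈ leadSet ord ℋ₁,
        lexp ord g ∈ rcone (L.mult (leadSet ord ℋ₁) ν) ν := by
      simpa using hmemI
    have hνle : ord.le ν (lexp ord g) := rcone_le ord A hmem
    rcases Finset.mem_union.mp hgmem with hs | hs
    · obtain ⟨h', m', rfl⟩ := Finset.mem_image.mp hν
      by_cases he : h' = h₁
      · subst he
        exact hgne (ord.le_antisymm _ _ hgle hνle)
      · exact hauto₁ h₁ m₁ _ hs h' m' he hmem
    · rw [hlead] at hν hmem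
      obtain ⟨h', m', rfl⟩ := Finset.mem_image.mp hν
      by_cases he : h' = h₂
      · subst he
        apply hgne
        apply ord.le_antisymm _ _ hgle
        rw [hlx]
        exact hνle
      · exact hauto₂ h₂ m₂ _ hs h' m' he hmem
  -- Step 3: conclude
  apply Finset.Subset.antisymm
  · intro h hh
    have hm : lexp ord h ∈ leadSet ord ℋ₂ := by
      rw [← hlead]; exact Finset.mem_image_of_mem _ hh
    obtain ⟨h', m', he⟩ := Finset.mem_image.mp hm
    have := key h hh h' m' he.symm
    rwa [this]
  · intro h hh
    have hm : lexp ord h ∈ leadSet ord ℋ₁ := by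
      rw [hlead]; exact Finset.mem_image_of_mem _ hh
    obtain ⟨h', m', he⟩ := Finset.mem_image.mp hm
    have := key h' m' h hh he
    rwa [← this]
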